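/- Fix a finite state space Ω of size N, a finite action set A, and a receiver utility u : A × Ω → ℝ. For an action a, let B(a) = {μ ∈ Δ(Ω) : ∑_ω μ(ω)u(a,ω) ≥ ∑_ω μ(ω)u(b,ω) for all b ∈ A} be the set of beliefs at which a is a best reply. If B(a) is nonempty and dim(B(a)) < N − 1, then there exists an action b ≠ a such that B(a) ⊆ B(b). -/

import Mathlib

open Finset

private lemma euclid_sum_apply {N : ℕ} {A : Type*} [Fintype A] (μ : A → EuclideanSpace ℝ (Fin N))
    (j : Fin N) : (∑ b, μ b) j = ∑ b, μ b j :=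
  by rw [WithLp.ofLp_sum]; exact Finset.sum_apply j Finset.univ _

/-- linear independence of differences of standard basis vectors -/
private lemma li_aux (N : ℕ) (hN : 0 < N) :
    LinearIndependent ℝ (fun k : Fin (N-1) =>
      (EuclideanSpace.single (⟨k.1+1, by omega⟩ : Fin N) (1:ℝ)) -
      EuclideanSpace.single (⟨0, hN⟩ : Fin N) (1:ℝ)) := by
  rw [Fintype.linearIndependent_iff]
  intro g hg k
  have h2 : ∀ j, (∑ k', g k' • ((EuclideanSpace.single (⟨k'.1+1, by omega⟩ : Fin N) (1:ℝ)) -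
      EuclideanSpace.single (⟨0, hN⟩ : Fin N) (1:ℝ))) j = 0 := by
    intro j; rw [hg]; rfl
  have h3 := h2 ⟨k.1+1, by omega⟩
  rw [euclid_sum_apply] at h3
  simp only [PiLp.smul_apply, PiLp.sub_apply, EuclideanSpace.single_apply, smul_eq_mul,
    Fin.mk.injEq] at h3
  rw [Finset.sum_eq_single k] at h3
  · simpa using h3
  · intro b _ hbk
    have : ¬ (k.1 + 1 = b.1 + 1) := by
      intro h; exact hbk (Fin.ext (by omega)).symm
    simp [this]
    intro h; exact absurd (Fin.ext h).symm hbk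
  · simp

theorem stmt9 (N : ℕ) (A : Type*) [Fintype A] (u : A → Fin N → ℝ)
    (B : A → Set (EuclideanSpace ℝ (Fin N)))
    (hB : ∀ a, B a = {μ | (∀ j, 0 ≤ μ j) ∧ (∑ j, μ j = 1) ∧
      ∀ b, ∑ ω, μ ω * u b ω ≤ ∑ ω, μ ω * u a ω})
    (a : A) (hne : (B a).Nonempty)
    (hdim : Module.finrank ℝ (vectorSpan ℝ (B a)) < N - 1) :
    ∃ b, b ≠ a ∧ B a ⊆ B b := by
  classical
  have hN1 : 1 ≤ N - 1 := Nat.one_le_iff_ne_zero.mpr (by omega)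
  have hN : 0 < N := by omega
  by_contra hcon
  push_neg at hcon
  set G : A → EuclideanSpace ℝ (Fin N) → ℝ := fun b ν => ∑ ω, ν ω * u b ω with hGdef
  -- unpack membership in B a
  have hmemBa : ∀ μ, μ ∈ B a ↔ (∀ j, 0 ≤ μ j) ∧ (∑ j, μ j = 1) ∧ ∀ b, G b μ ≤ G a μ := by
    intro μ; rw [hB a]; rfl
  -- for each b, a point of B a where b is strictly suboptimal (if b ≠ a)
  have key : ∀ b, ∃ μ, μ ∈ B a ∧ (b ≠ a → G b μ < G a μ) := by
    intro b
    by_cases hb : b = a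
    · exact ⟨hne.choose, hne.choose_spec, fun h => absurd hb h⟩
    · obtain ⟨μ, hμa, hμb⟩ := Set.not_subset.mp (hcon b hb)
      refine ⟨μ, hμa, fun _ => ?_⟩
      obtain ⟨h1, h2, h3⟩ := (hmemBa μ).mp hμa
      rw [hB b] at hμb
      simp only [Set.mem_setOf_eq, not_and] at hμb
      push_neg at hμb
      obtain ⟨c, hc⟩ := hμb h1 h2
      exact lt_of_lt_of_le hc (h3 c)
  choose μf hmem hlt using key
  have hcomp := fun b => (hmemBa _).mp (hmem b)
  have hcard : 0 < Fintype.card A := Fintype.card_pos_iff.mpr ⟨a⟩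
  set r : ℝ := (Fintype.card A : ℝ)⁻¹ with hr
  have hrpos : 0 < r := by positivity
  set μs : EuclideanSpace ℝ (Fin N) := r • ∑ b, μf b with hμs
  have hμsj : ∀ j, μs j = r * ∑ b, μf b j := by
    intro j; rw [hμs, PiLp.smul_apply, smul_eq_mul, euclid_sum_apply]
  -- μs is in the simplex
  have hμs0 : ∀ j, 0 ≤ μs j := by
    intro j; rw [hμsj]
    exact mul_nonneg hrpos.le (Finset.sum_nonneg fun b _ => (hcomp b).1 j)
  have hμs1 : ∑ j, μs j = 1 := by
    simp only [hμsj]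
    rw [← Finset.mul_sum, Finset.sum_comm]
    have : ∀ b : A, b ∈ Finset.univ → ∑ j, μf b j = 1 := fun b _ => (hcomp b).2.1
    rw [Finset.sum_congr rfl this]
    simp only [Finset.sum_const, Finset.card_univ, nsmul_eq_mul, mul_one, hr]
    exact inv_mul_cancel₀ (Nat.cast_ne_zero.mpr hcard.ne')
  -- G is linear enough
  have hGμs : ∀ b, G b μs = r * ∑ c, G b (μf c) := by
    intro b
    simp only [hGdef]
    calc ∑ ω, μs ω * u b ω = ∑ ω, ∑ c, r * (μf c ω * u b ω) :=
          Finset.sum_congr rfl fun ω _ => by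
            rw [hμsj, mul_assoc, Finset.sum_mul, Finset.mul_sum]
      _ = ∑ c, ∑ ω, r * (μf c ω * u b ω) := Finset.sum_comm
      _ = r * ∑ c, ∑ ω, μf c ω * u b ω := by
            rw [Finset.mul_sum]
            exact Finset.sum_congr rfl fun c _ => (Finset.mul_sum _ _ _).symm
  -- strict inequalities at μs
  have hstrict : ∀ b, b ≠ a → G b μs < G a μs := by
    intro b hb
    rw [hGμs, hGμs]
    apply mul_lt_mul_of_pos_left _ hrpos
    apply Finset.sum_lt_sum
    · intro c _; exact (hcomp c).2.2 b
    · exact ⟨b, Finset.mem_univ b, hlt b hb⟩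
  -- the open region where all b ≠ a are strictly suboptimal
  set U : Set (EuclideanSpace ℝ (Fin N)) := ⋂ b, {ν | b ≠ a → G b ν < G a ν} with hU
  have hGcont : ∀ b, Continuous (G b) :=
    fun b => continuous_finset_sum _ fun ω _ => ((EuclideanSpace.proj ω).continuous.mul continuous_const)
  have hUopen : IsOpen U := by
    apply isOpen_iInter_of_finite
    intro b
    by_cases hb : b = a
    · convert isOpen_univ using 1
      ext ν; simp [hb]
    · have : {ν : EuclideanSpace ℝ (Fin N) | b ≠ a → G b ν < G a ν}
          = {ν | G b ν < G a ν} := by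
        ext ν; simp [hb]
      rw [this]
      exact isOpen_lt (hGcont b) (hGcont a)
  have hμsU : μs ∈ U := by
    rw [hU]; exact Set.mem_iInter.mpr fun b hb => hstrict b hb
  obtain ⟨ε, hεpos, hball⟩ := Metric.isOpen_iff.mp hUopen μs hμsU
  -- anything in the simplex and in U is in B a
  have hsub : ∀ ν : EuclideanSpace ℝ (Fin N), (∀ j, 0 ≤ ν j) → (∑ j, ν j = 1) →
      ν ∈ U → ν ∈ B a := by
    intro ν h0 h1 hν
    rw [hmemBa]
    refine ⟨h0, h1, fun b => ?_⟩
    by_cases hb : b = a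
    · rw [hb]
    · exact (Set.mem_iInter.mp hν b hb).le
  -- choose t small
  set M : ℝ := 2 + ‖μs‖ with hM
  have hMpos : (0:ℝ) < M := by positivity
  set t : ℝ := min 1 (ε / (2 * M)) with ht
  have htpos : 0 < t := lt_min one_pos (by positivity)
  have ht1 : t ≤ 1 := min_le_left _ _
  -- the perturbed points
  set e : Fin N → EuclideanSpace ℝ (Fin N) := fun i => EuclideanSpace.single i 1 with he
  set ν : Fin N → EuclideanSpace ℝ (Fin N) := fun i => μs + t • (e i - μs) with hν
  have hnorme : ∀ i, ‖e i‖ ≤ 1 := by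
    intro i; rw [he]
    simp [EuclideanSpace.norm_single]
  have hνball : ∀ i, ν i ∈ Metric.ball μs ε := by
    intro i
    rw [Metric.mem_ball, dist_eq_norm]
    have : ν i - μs = t • (e i - μs) := by rw [hν]; exact add_sub_cancel_left μs _
    rw [this, norm_smul, Real.norm_eq_abs, abs_of_pos htpos]
    have h1 : ‖e i - μs‖ ≤ M := by
      calc ‖e i - μs‖ ≤ ‖e i‖ + ‖μs‖ := norm_sub_le _ _
        _ ≤ M := by rw [hM]; linarith [hnorme i]
    calc t * ‖e i - μs‖ ≤ (ε / (2 * M)) * M :=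
          mul_le_mul (min_le_right _ _) h1 (norm_nonneg _) (by positivity)
      _ = ε / 2 := by field_simp
      _ < ε := by linarith
  have hνj : ∀ i j, ν i j = μs j + t * ((e i) j - μs j) := by
    intro i j
    show (μs + t • (e i - μs)) j = _
    simp only [PiLp.add_apply, PiLp.smul_apply, PiLp.sub_apply, smul_eq_mul]
  have hνsimplex : ∀ i, (∀ j, 0 ≤ ν i j) ∧ (∑ j, ν i j = 1) := by
    intro i
    constructor
    · intro j
      rw [hνj]
      have hej : (0:ℝ) ≤ (e i) j := by
        rw [he]; simp only [EuclideanSpace.single_apply]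
        split <;> norm_num
      nlinarith [hμs0 j, htpos.le]
    · have hesum : ∑ j, (e i) j = 1 := by
        simp only [he, EuclideanSpace.single_apply]
        rw [Finset.sum_ite_eq' Finset.univ i (fun _ => (1:ℝ))]
        simp
      simp only [hνj]
      rw [Finset.sum_add_distrib, hμs1, ← Finset.mul_sum]
      rw [Finset.sum_sub_distrib, hesum, hμs1]
      ring
  have hνBa : ∀ i, ν i ∈ B a := fun i =>
    hsub (ν i) (hνsimplex i).1 (hνsimplex i).2 (hball (hνball i))
  -- the differences are in vectorSpan
  have hdiff : ∀ i j : Fin N, t • (e i - e j) ∈ vectorSpan ℝ (B a) := by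
    intro i j
    have heq : ν i - ν j = t • (e i - e j) := by
      show (μs + t • (e i - μs)) - (μs + t • (e j - μs)) = t • (e i - e j)
      rw [smul_sub, smul_sub, smul_sub]
      abel
    rw [← heq]
    exact vsub_mem_vectorSpan ℝ (hνBa i) (hνBa j)
  have hdiff' : ∀ i j : Fin N, e i - e j ∈ vectorSpan ℝ (B a) := by
    intro i j
    have := Submodule.smul_mem (vectorSpan ℝ (B a)) t⁻¹ (hdiff i j)
    rwa [smul_smul, inv_mul_cancel₀ htpos.ne', one_smul] at this
  -- linear independence gives the rank lower bound
  set v : Fin (N-1) → vectorSpan ℝ (B a) := fun k =>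
    ⟨e ⟨k.1+1, by omega⟩ - e ⟨0, hN⟩, hdiff' _ _⟩ with hv
  have hli : LinearIndependent ℝ v := by
    have h0 : LinearIndependent ℝ (fun k : Fin (N-1) =>
        (EuclideanSpace.single (⟨k.1+1, by omega⟩ : Fin N) (1:ℝ)) -
        EuclideanSpace.single (⟨0, hN⟩ : Fin N) (1:ℝ)) := li_aux N hN
    have : (vectorSpan ℝ (B a)).subtype ∘ v = (fun k : Fin (N-1) =>
        (EuclideanSpace.single (⟨k.1+1, by omega⟩ : Fin N) (1:ℝ)) -
        EuclideanSpace.single (⟨0, hN⟩ : Fin N) (1:ℝ)) := by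
      funext k; rfl
    exact LinearIndependent.of_comp (vectorSpan ℝ (B a)).subtype (this ▸ h0)
  have hge : N - 1 ≤ Module.finrank ℝ (vectorSpan ℝ (B a)) := by
    have := hli.fintype_card_le_finrank
    simpa using this
  omega
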